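/- For nonzero integers z_1, z_2 and vectors w, w' in R^d each of norm 2r, if |z_1 * w - z_2 * w'| < 2r then |<w, w'>| >= 2 r^2. -/

import Mathlib

/-- For nonzero integers z₁, z₂ and vectors w, u ∈ ℝ^d each of norm 2r, if
‖z₁ w - z₂ u‖ < 2r then |⟨w, u⟩| ≥ 2r². -/
theorem inner_ge_of_close_multiples (d : ℕ) (r : ℝ) (hr : 0 < r)
    (w u : EuclideanSpace ℝ (Fin d)) (hw : ‖w‖ = 2 * r) (hu : ‖u‖ = 2 * r)
    (z₁ z₂ : ℤ) (hz₁ : z₁ ≠ 0) (hz₂ : z₂ ≠ 0)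
    (hclose : ‖(z₁ : ℝ) • w - (z₂ : ℝ) • u‖ < 2 * r) :
    |(inner ℝ w u : ℝ)| ≥ 2 * r^2 := by
  set a : ℝ := (z₁ : ℝ)
  set b : ℝ := (z₂ : ℝ)
  set I : ℝ := (inner ℝ w u : ℝ) with hI
  have ha : (1 : ℝ) ≤ a ^ 2 := by
    have := Int.one_le_abs (by exact hz₁ : z₁ ≠ 0)
    have h2 : (1 : ℤ) ≤ z₁ ^ 2 := by nlinarith [sq_abs z₁]
    have h3 : (1 : ℝ) ≤ (z₁ : ℝ) ^ 2 := by exact_mod_cast h2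
    simpa [a] using h3
  have hb : (1 : ℝ) ≤ b ^ 2 := by
    have := Int.one_le_abs (by exact hz₂ : z₂ ≠ 0)
    have h2 : (1 : ℤ) ≤ z₂ ^ 2 := by nlinarith [sq_abs z₂]
    have h3 : (1 : ℝ) ≤ (z₂ : ℝ) ^ 2 := by exact_mod_cast h2
    simpa [b] using h3
  have hsq : ‖a • w - b • u‖ ^ 2 < (2 * r) ^ 2 := by
    have hn : (0 : ℝ) ≤ ‖a • w - b • u‖ := norm_nonneg _
    nlinarith
  have hexp : ‖a • w - b • u‖ ^ 2
      = a ^ 2 * (2 * r) ^ 2 - 2 * (a * b * I) + b ^ 2 * (2 * r) ^ 2 := by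
    rw [@norm_sub_sq_real, norm_smul, norm_smul, real_inner_smul_left,
      real_inner_smul_right, hw, hu]
    simp only [Real.norm_eq_abs, mul_pow, sq_abs, ← hI]
    ring
  rw [hexp] at hsq
  by_contra hcon
  push_neg at hcon
  rw [abs_lt] at hcon
  obtain ⟨h1, h2⟩ := hcon
  rcases le_or_gt 0 (a * b) with hab | hab
  · nlinarith [sq_nonneg (a - b), sq_nonneg (a + b), mul_pos hr hr,
      mul_nonneg hab (le_of_lt (show (0:ℝ) < 2 * r ^ 2 - I by linarith))]
  · nlinarith [sq_nonneg (a - b), sq_nonneg (a + b), mul_pos hr hr,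
      mul_nonneg (le_of_lt (neg_pos.mpr hab)) (le_of_lt (show (0:ℝ) < 2 * r ^ 2 + I by linarith))]
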